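/- Let N be a (2n−1)-dimensional Milnor fillable manifold (the link of a normal isolated complex-analytic singularity of dimension n), n ≥ 2. Then for any i₁,...,i_k ∈ {1,...,n−1} with i₁+⋯+i_k ≥ n, the cup product map H^{i₁}(N;ℚ) ⊗ ⋯ ⊗ H^{i_k}(N;ℚ) → H^{i₁+⋯+i_k}(N;ℚ) vanishes identically. -/
import Mathlib


/-- Durfee–Hain theorem.
Let `N` be a `(2n-1)`-dimensional Milnor fillable manifold (the link of a normal isolated
complex-analytic singularity of dimension `n`), `n ≥ 2`.  Following the context, Milnor
fillability is assumed in the form: `N` is the boundary of a compact oriented `2n`-manifold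
`W` (a divisorial resolution) satisfying the Goresky–MacPherson property, namely the
degree-preserving restriction homomorphism `b : H^*(W;ℚ) → H^*(N;ℚ)` is surjective in each
degree `i ≤ n-1` and zero in each degree `i` with `n ≤ i ≤ 2n-1` (and `H^j(N;ℚ) = 0` for
`j ≥ 2n`, as `N` is a closed `(2n-1)`-manifold).  Then for any `i₁,…,i_k ∈ {1,…,n-1}` with
`i₁+⋯+i_k ≥ n`, the cup product map
`H^{i₁}(N;ℚ) ⊗ ⋯ ⊗ H^{i_k}(N;ℚ) → H^{i₁+⋯+i_k}(N;ℚ)` vanishes identically. -/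
theorem statement9
    (n : ℕ) (hn : 2 ≤ n)
    (HW HN : Type) [Ring HW] [Ring HN] [Algebra ℚ HW] [Algebra ℚ HN]
    (𝒲 : ℕ → Submodule ℚ HW) (𝒩 : ℕ → Submodule ℚ HN)
    [GradedAlgebra 𝒲] [GradedAlgebra 𝒩]
    (b : HW →ₐ[ℚ] HN)
    (hb : ∀ j, ∀ x ∈ 𝒲 j, b x ∈ 𝒩 j)
    (hsurj : ∀ j, j ≤ n - 1 → ∀ y ∈ 𝒩 j, ∃ x ∈ 𝒲 j, b x = y)
    (hvan : ∀ j, n ≤ j → j ≤ 2 * n - 1 → ∀ x ∈ 𝒲 j, b x = 0)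
    (hNtop : ∀ j, 2 * n ≤ j → 𝒩 j = ⊥)
    (k : ℕ) (i : Fin k → ℕ)
    (hil : ∀ l, 1 ≤ i l) (hiu : ∀ l, i l ≤ n - 1)
    (hsum : n ≤ ∑ l, i l)
    (x : Fin k → HN) (hx : ∀ l, x l ∈ 𝒩 (i l)) :
    (List.ofFn x).prod = 0 := by
  by_cases hc : 2 * n ≤ ∑ l, i l
  · have hmem : (List.ofFn x).prod ∈ 𝒩 ((List.ofFn i).sum) :=
      SetLike.list_prod_ofFn_mem_graded (A := 𝒩) i x hx
    rw [List.sum_ofFn] at hmem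
    rw [hNtop _ hc] at hmem
    exact hmem
  · push_neg at hc
    -- lift each x l to w l ∈ 𝒲 (i l)
    choose w hw hbw using fun l => hsurj (i l) (le_trans (hiu l) le_rfl) (x l) (hx l)
    have hmemW : (List.ofFn w).prod ∈ 𝒲 ((List.ofFn i).sum) :=
      SetLike.list_prod_ofFn_mem_graded (A := 𝒲) i w hw
    rw [List.sum_ofFn] at hmemW
    have hzero : b ((List.ofFn w).prod) = 0 :=
      hvan _ hsum (by omega) _ hmemW
    have : b ((List.ofFn w).prod) = (List.ofFn x).prod := by
      rw [map_list_prod]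
      congr 1
      rw [List.map_ofFn]
      congr 1
      funext l
      exact hbw l
    rw [this] at hzero
    exact hzero
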